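/- Let d, w₁, w₂ be odd positive integers and χ a Dirichlet character of conductor d. With 𝓔_{n,λ,χ}(x) the generalized degenerate Euler polynomials attached to χ and R_k(m, λ|χ) := 2 ∑_{l=0}^{m} (−1)^l χ(l) (l|λ)_k, one has for all l ≥ 0: ∑_{i=0}^{l} C(l,i) 𝓔_{i, λ/w₁, χ}(w₂ x) w₁^i w₂^{l−i} R_{l−i}(d w₁ − 1, λ/w₂ | χ) = ∑_{i=0}^{l} C(l,i) 𝓔_{i, λ/w₂, χ}(w₁ x) w₂^i w₁^{l−i} R_{l−i}(d w₂ − 1, λ/w₁ | χ), as an identity of polynomials in x (for a fixed nonzero parameter λ ∈ ℂ, or in the field ℚ(λ) of rational functions). -/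

import Mathlib

open scoped Nat

/-- The degenerate falling factorial `(x|λ)_n = x(x−λ)⋯(x−(n−1)λ)`. -/
noncomputable def degFall {R : Type*} [CommRing R] (x lam : R) (n : ℕ) : R :=
  ∏ j ∈ Finset.range n, (x - (j : R) * lam)

/-- `(1+λt)^{y/λ} := ∑_{n≥0} (y|λ)_n tⁿ/n!` as a formal power series. -/
noncomputable def degSeries {R : Type*} [CommRing R] [Algebra ℚ R] (y lam : R) :
    PowerSeries R :=
  PowerSeries.mk fun n => (n ! : ℚ)⁻¹ • degFall y lam n

/-- The generating identity defining the generalized degenerate Euler polynomials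
`𝓔_{n,λ,χ}(x)` attached to χ, with parameter `mu`:
`((1+μt)^{d/μ}+1)·∑ 𝓔_{n,μ,χ}(x) tⁿ/n! = 2(∑_{a<d}(−1)^a χ(a)(1+μt)^{a/μ})(1+μt)^{x/μ}`. -/
noncomputable def genDegEulerRel (d : ℕ) (χ : DirichletCharacter ℂ d) (mu : ℂ)
    (E : ℕ → Polynomial ℂ) : Prop :=
  (degSeries (Polynomial.C (d : ℂ)) (Polynomial.C mu) + 1) *
      PowerSeries.mk (fun n => (n ! : ℂ)⁻¹ • E n)
    = 2 * ((∑ a ∈ Finset.range d,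
        ((-1 : ℂ) ^ a * χ (a : ZMod d)) • degSeries (Polynomial.C (a : ℂ)) (Polynomial.C mu)) *
        degSeries Polynomial.X (Polynomial.C mu))

/-- `R_k(m, μ|χ) := 2 ∑_{l=0}^{m} (−1)^l χ(l) (l|μ)_k`. -/
noncomputable def Rsum (d : ℕ) (χ : DirichletCharacter ℂ d) (k m : ℕ) (mu : ℂ) : ℂ :=
  2 * ∑ l ∈ Finset.range (m + 1), (-1 : ℂ) ^ l * χ (l : ZMod d) * degFall (l : ℂ) mu k

set_option maxHeartbeats 1000000
set_option synthInstance.maxHeartbeats 400000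

open scoped Nat
open Finset

variable {R : Type*} [CommRing R]

lemma degFall_zero (x lam : R) : degFall x lam 0 = 1 := by simp [degFall]

lemma degFall_succ (x lam : R) (n : ℕ) :
    degFall x lam (n + 1) = degFall x lam n * (x - (n : R) * lam) := by
  simp [degFall, Finset.prod_range_succ]

lemma degFall_vandermonde (x y lam : R) (n : ℕ) :
    degFall (x + y) lam n
      = ∑ k ∈ range (n + 1), (n.choose k : R) * (degFall x lam k * degFall y lam (n - k)) := by
  induction n with
  | zero => simp [degFall_zero]
  | succ n ih =>
    rw [degFall_succ, ih, Finset.sum_mul]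
    have key : ∀ k ∈ range (n + 1),
        (n.choose k : R) * (degFall x lam k * degFall y lam (n - k)) * (x + y - (n : R) * lam)
          = (n.choose k : R) * (degFall x lam (k + 1) * degFall y lam (n - k))
            + (n.choose k : R) * (degFall x lam k * degFall y lam (n - k + 1)) := by
      intro k hk
      rw [Finset.mem_range] at hk
      have hk' : k ≤ n := Nat.lt_succ_iff.mp hk
      have h1 : x + y - (n : R) * lam = (x - (k : R) * lam) + (y - ((n - k : ℕ) : R) * lam) := by
        have : ((n - k : ℕ) : R) = (n : R) - (k : R) := by
          push_cast [Nat.cast_sub hk']; ring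
        rw [this]; ring
      rw [h1, degFall_succ, degFall_succ, mul_add]; ring
    rw [Finset.sum_congr rfl key, Finset.sum_add_distrib]
    -- first sum: ∑_{k=0}^{n} C(n,k) A_{k+1} B_{n-k}  = ∑_{k=1}^{n+1} C(n,k-1) A_k B_{n+1-k}
    have e1 : ∑ k ∈ range (n + 1), (n.choose k : R) * (degFall x lam (k + 1) * degFall y lam (n - k))
        = ∑ k ∈ range (n + 2), (if k = 0 then 0 else (n.choose (k-1) : R)) *
            (degFall x lam k * degFall y lam (n + 1 - k)) := by
      rw [Finset.sum_range_succ' (fun k => (if k = 0 then 0 else (n.choose (k-1) : R)) *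
            (degFall x lam k * degFall y lam (n + 1 - k))) (n+1)]
      simp only [reduceIte, Nat.add_sub_cancel, zero_mul, add_zero]
      apply Finset.sum_congr rfl
      intro k hk
      rw [Finset.mem_range] at hk
      rw [if_neg (Nat.succ_ne_zero _)]
      have h2 : n + 1 - (k + 1) = n - k := by omega
      rw [h2]
    have e2 : ∑ k ∈ range (n + 1), (n.choose k : R) * (degFall x lam k * degFall y lam (n - k + 1))
        = ∑ k ∈ range (n + 2), (if k = n + 1 then 0 else (n.choose k : R)) *
            (degFall x lam k * degFall y lam (n + 1 - k)) := by
      symm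
      rw [Finset.sum_range_succ, if_pos rfl, zero_mul, add_zero]
      apply Finset.sum_congr rfl
      intro k hk
      rw [Finset.mem_range] at hk
      rw [if_neg (by omega)]
      have h2 : n + 1 - k = n - k + 1 := by omega
      rw [h2]
    rw [e1, e2, ← Finset.sum_add_distrib]
    apply Finset.sum_congr rfl
    intro k hk
    rw [Finset.mem_range] at hk
    rcases Nat.eq_zero_or_pos k with h0 | h0
    · subst h0; simp
    · obtain ⟨m, rfl⟩ : ∃ m, k = m + 1 := ⟨k - 1, by omega⟩
      rw [if_neg (Nat.succ_ne_zero _)]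
      by_cases hkn : m + 1 = n + 1
      · rw [if_pos hkn, zero_mul, add_zero, Nat.add_sub_cancel]
        obtain rfl : m = n := by omega
        rw [Nat.choose_self, Nat.choose_self]
      · rw [if_neg hkn, ← add_mul, Nat.add_sub_cancel]
        congr 1
        rw [← Nat.cast_add, Nat.choose_succ_succ n m]

section DegSeries
variable [Algebra ℚ R]

lemma coeff_degSeries (y lam : R) (n : ℕ) :
    PowerSeries.coeff n (degSeries y lam) = (n ! : ℚ)⁻¹ • degFall y lam n := by
  simp [degSeries]

lemma degSeries_mul (x y lam : R) :
    degSeries x lam * degSeries y lam = degSeries (x + y) lam := by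
  ext n
  rw [PowerSeries.coeff_mul, coeff_degSeries, degFall_vandermonde,
    Finset.Nat.sum_antidiagonal_eq_sum_range_succ (fun a b =>
      PowerSeries.coeff a (degSeries x lam) * PowerSeries.coeff b (degSeries y lam)) n,
    Finset.smul_sum]
  apply Finset.sum_congr rfl
  intro k hk
  rw [Finset.mem_range] at hk
  have hk' : k ≤ n := Nat.lt_succ_iff.mp hk
  rw [coeff_degSeries, coeff_degSeries, smul_mul_smul_comm]
  have hcast : ((n.choose k : ℕ) : R) * (degFall x lam k * degFall y lam (n - k))
      = ((n.choose k : ℚ)) • (degFall x lam k * degFall y lam (n - k)) := by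
    rw [Algebra.smul_def, map_natCast]
  rw [hcast, smul_smul]
  congr 1
  have h0 : (k ! : ℚ) ≠ 0 := Nat.cast_ne_zero.mpr (Nat.factorial_ne_zero k)
  have h1 : ((n - k)! : ℚ) ≠ 0 := Nat.cast_ne_zero.mpr (Nat.factorial_ne_zero _)
  have h2 : (n ! : ℚ) ≠ 0 := Nat.cast_ne_zero.mpr (Nat.factorial_ne_zero n)
  have key : (n.choose k : ℚ) * k ! * (n-k)! = n ! := by
    exact_mod_cast congrArg (Nat.cast : ℕ → ℚ) (Nat.choose_mul_factorial_mul_factorial hk')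
  field_simp
  linear_combination -key

lemma degFall_self_zero (lam : R) (m : ℕ) : degFall (0 : R) lam (m + 1) = 0 := by
  apply Finset.prod_eq_zero (i := 0) (Finset.mem_range.mpr (Nat.succ_pos m))
  simp

lemma degSeries_zero (lam : R) : degSeries (0 : R) lam = 1 := by
  ext n
  cases n with
  | zero => simp [coeff_degSeries, degFall_zero]
  | succ m => simp [coeff_degSeries, degFall_self_zero]

lemma constantCoeff_degSeries (y lam : R) :
    PowerSeries.constantCoeff (degSeries y lam) = 1 := by
  rw [← PowerSeries.coeff_zero_eq_constantCoeff, coeff_degSeries]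
  simp [degFall_zero]

lemma degSeries_pow (x lam : R) (j : ℕ) :
    degSeries x lam ^ j = degSeries ((j : R) * x) lam := by
  induction j with
  | zero => simp [degSeries_zero]
  | succ m ih =>
    rw [pow_succ, ih, degSeries_mul]
    congr 1
    push_cast
    ring

lemma degFall_mul_left (c x lam : R) (n : ℕ) :
    degFall (c * x) (c * lam) n = c ^ n * degFall x lam n := by
  unfold degFall
  calc ∏ j ∈ Finset.range n, (c * x - (j : R) * (c * lam))
      = ∏ j ∈ Finset.range n, (c * (x - (j : R) * lam)) := by
        apply Finset.prod_congr rfl; intro j _; ring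
    _ = c ^ n * ∏ j ∈ Finset.range n, (x - (j : R) * lam) := by
        rw [Finset.prod_mul_distrib, Finset.prod_const, Finset.card_range]

lemma rescale_degSeries (c y lam : R) :
    PowerSeries.rescale c (degSeries y lam) = degSeries (c * y) (c * lam) := by
  ext n
  rw [PowerSeries.coeff_rescale, coeff_degSeries, coeff_degSeries, degFall_mul_left,
    mul_smul_comm]

lemma map_degSeries {S : Type*} [CommRing S] [Algebra ℚ S] (f : R →ₐ[ℚ] S) (y lam : R) :
    PowerSeries.map (f : R →+* S) (degSeries y lam) = degSeries (f y) (f lam) := by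
  ext n
  rw [PowerSeries.coeff_map, coeff_degSeries, coeff_degSeries]
  rw [show ((n ! : ℚ)⁻¹ • degFall y lam n : R) = (n ! : ℚ)⁻¹ • degFall y lam n from rfl]
  rw [show (f : R →+* S) (((n ! : ℚ)⁻¹ : ℚ) • degFall y lam n) = (n ! : ℚ)⁻¹ • (f : R →+* S) (degFall y lam n) from f.toLinearMap.map_smul _ _]
  congr 1
  unfold degFall
  rw [map_prod]
  apply Finset.prod_congr rfl
  intro j _
  rw [map_sub, map_mul, map_natCast]
  rfl

end DegSeries

lemma odd_alt_geom_sum {S : Type*} [CommRing S] (s : S) {w : ℕ} (hw : Odd w) :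
    (s + 1) * ∑ j ∈ Finset.range w, (-1 : S) ^ j * s ^ j = s ^ w + 1 := by
  have h1 : ∀ j, (-1 : S) ^ j * s ^ j = (-s) ^ j := by
    intro j; rw [neg_pow]; ring
  simp_rw [h1]
  have h2 := geom_sum_mul (-s) w
  rw [hw.neg_pow] at h2
  linear_combination -h2

open Polynomial PowerSeries

section Main

-- the transformation: rescale by C w, then substitute X ↦ C w' * X in coefficients
lemma map_degSeries' (f : Polynomial ℂ →ₐ[ℂ] Polynomial ℂ) (y lam : Polynomial ℂ) :
    PowerSeries.map (f : Polynomial ℂ →+* Polynomial ℂ) (degSeries y lam)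
      = degSeries (f y) (f lam) := by
  have h := map_degSeries (f.restrictScalars ℚ) y lam
  convert h using 2 <;> rfl

noncomputable def trX (w w' : ℂ) (f : PowerSeries (Polynomial ℂ)) :
    PowerSeries (Polynomial ℂ) :=
  PowerSeries.map ((Polynomial.aeval (Polynomial.C w' * Polynomial.X) :
      Polynomial ℂ →ₐ[ℂ] Polynomial ℂ) : Polynomial ℂ →+* Polynomial ℂ)
    (PowerSeries.rescale (Polynomial.C w) f)

lemma coeff_trans (w w' : ℂ) (f : PowerSeries (Polynomial ℂ)) (n : ℕ) :
    PowerSeries.coeff n (trX w w' f)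
      = Polynomial.C (w ^ n) *
          ((PowerSeries.coeff n f).comp (Polynomial.C w' * Polynomial.X)) := by
  rw [trX, PowerSeries.coeff_map, PowerSeries.coeff_rescale, Polynomial.comp_eq_aeval]
  simp [map_mul, map_pow, Polynomial.aeval_C, Polynomial.algebraMap_eq]

lemma trans_mul (w w' : ℂ) (f g : PowerSeries (Polynomial ℂ)) :
    trX w w' (f * g) = trX w w' f * trX w w' g := by
  unfold trX; rw [map_mul, map_mul]

lemma trans_add (w w' : ℂ) (f g : PowerSeries (Polynomial ℂ)) :
    trX w w' (f + g) = trX w w' f + trX w w' g := by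
  unfold trX; rw [map_add, map_add]

lemma trans_one (w w' : ℂ) : trX w w' (1 : PowerSeries (Polynomial ℂ)) = 1 := by
  unfold trX; rw [map_one, map_one]

lemma trans_smul (w w' c : ℂ) (f : PowerSeries (Polynomial ℂ)) :
    trX w w' (c • f) = c • trX w w' f := by
  ext n
  rw [coeff_trans, PowerSeries.coeff_smul, PowerSeries.coeff_smul, coeff_trans,
    Polynomial.smul_eq_C_mul, Polynomial.smul_eq_C_mul]
  rw [Polynomial.mul_comp, Polynomial.C_comp]
  ring

lemma trans_sum (w w' : ℂ) {ι : Type*} (s : Finset ι) (f : ι → PowerSeries (Polynomial ℂ)) :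
    trX w w' (∑ i ∈ s, f i) = ∑ i ∈ s, trX w w' (f i) := by
  unfold trX; rw [map_sum, map_sum]

lemma trans_degSeries_C (w w' : ℂ) (hw : w ≠ 0) (lam y : ℂ) :
    trX w w' (degSeries (Polynomial.C y) (Polynomial.C (lam / w)))
      = degSeries (Polynomial.C (y * w)) (Polynomial.C lam) := by
  unfold trX
  rw [rescale_degSeries, ← Polynomial.C_mul, ← Polynomial.C_mul,
    mul_div_cancel₀ _ hw]
  rw [map_degSeries' (Polynomial.aeval (Polynomial.C w' * Polynomial.X))]
  rw [Polynomial.aeval_C, Polynomial.aeval_C, Polynomial.algebraMap_eq, mul_comm w y]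

lemma trans_degSeries_X (w w' : ℂ) (hw : w ≠ 0) (lam : ℂ) :
    trX w w' (degSeries Polynomial.X (Polynomial.C (lam / w)))
      = degSeries (Polynomial.C (w * w') * Polynomial.X) (Polynomial.C lam) := by
  unfold trX
  rw [rescale_degSeries, ← Polynomial.C_mul, mul_div_cancel₀ _ hw]
  rw [map_degSeries' (Polynomial.aeval (Polynomial.C w' * Polynomial.X))]
  rw [map_mul, Polynomial.aeval_X, Polynomial.aeval_C, Polynomial.aeval_C,
    Polynomial.algebraMap_eq, ← mul_assoc, ← Polynomial.C_mul]

end Main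

lemma trans_two (w w' : ℂ) : trX w w' (2 : PowerSeries (Polynomial ℂ)) = 2 := by
  unfold trX
  rw [map_ofNat, map_ofNat]

lemma trans_mk (w w' : ℂ) (E : ℕ → Polynomial ℂ) :
    trX w w' (PowerSeries.mk fun n => (n ! : ℂ)⁻¹ • E n)
      = PowerSeries.mk fun n => (n ! : ℂ)⁻¹ •
          (Polynomial.C (w ^ n) * (E n).comp (Polynomial.C w' * Polynomial.X)) := by
  ext n
  rw [coeff_trans, PowerSeries.coeff_mk, PowerSeries.coeff_mk, Polynomial.smul_eq_C_mul,
    Polynomial.smul_eq_C_mul, Polynomial.mul_comp, Polynomial.C_comp]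
  ring

section Setup

variable (d : ℕ) (χ : DirichletCharacter ℂ d) (lam : ℂ)

noncomputable def Aser (w : ℂ) : PowerSeries (Polynomial ℂ) :=
  ∑ a ∈ Finset.range d, ((-1 : ℂ) ^ a * χ (a : ZMod d)) •
    degSeries (Polynomial.C ((a : ℂ) * w)) (Polynomial.C lam)

noncomputable def Gser (u : ℂ) (v : ℕ) : PowerSeries (Polynomial ℂ) :=
  ∑ j ∈ Finset.range v, ((-1 : ℂ) ^ j) •
    degSeries (Polynomial.C (u * (j : ℂ))) (Polynomial.C lam)

noncomputable def Mser (E : ℕ → Polynomial ℂ) (w w' : ℂ) : PowerSeries (Polynomial ℂ) :=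
  PowerSeries.mk fun n => (n ! : ℂ)⁻¹ •
    (Polynomial.C (w ^ n) * (E n).comp (Polynomial.C w' * Polynomial.X))

noncomputable def Nser (m : ℕ) (v : ℂ) : PowerSeries (Polynomial ℂ) :=
  ∑ l ∈ Finset.range m, ((-1 : ℂ) ^ l * χ (l : ZMod d)) •
    degSeries (Polynomial.C ((l : ℂ) * v)) (Polynomial.C lam)

lemma rel_trans (w w' : ℂ) (hw : w ≠ 0) (E : ℕ → Polynomial ℂ)
    (hE : genDegEulerRel d χ (lam / w) E) :
    (degSeries (Polynomial.C ((d : ℂ) * w)) (Polynomial.C lam) + 1) * Mser E w w'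
      = 2 * (Aser d χ lam w *
          degSeries (Polynomial.C (w * w') * Polynomial.X) (Polynomial.C lam)) := by
  unfold genDegEulerRel at hE
  have h := congrArg (trX w w') hE
  simp only [trans_mul, trans_add, trans_one, trans_two, trans_sum, trans_smul, trans_mk,
    trans_degSeries_C w w' hw lam, trans_degSeries_X w w' hw lam] at h
  rw [Mser, Aser]
  exact h

lemma geom_step (u : ℂ) {v : ℕ} (hv : Odd v) :
    (degSeries (Polynomial.C u) (Polynomial.C lam) + 1) * Gser lam u v
      = degSeries (Polynomial.C (u * (v : ℂ))) (Polynomial.C lam) + 1 := by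
  have hpow : ∀ j : ℕ, degSeries (Polynomial.C u) (Polynomial.C lam) ^ j
      = degSeries (Polynomial.C (u * (j : ℂ))) (Polynomial.C lam) := by
    intro j
    have harg : ((j : Polynomial ℂ)) * Polynomial.C u = Polynomial.C (u * (j : ℂ)) := by
      rw [← Polynomial.C_eq_natCast, ← Polynomial.C_mul, mul_comm]
    rw [degSeries_pow (Polynomial.C u) (Polynomial.C lam) j, harg]
  have hsm : ∀ j : ℕ, ((-1 : ℂ) ^ j) •
        degSeries (Polynomial.C (u * (j : ℂ))) (Polynomial.C lam)
      = (-1 : PowerSeries (Polynomial ℂ)) ^ j *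
        degSeries (Polynomial.C (u * (j : ℂ))) (Polynomial.C lam) := by
    intro j
    rcases Nat.even_or_odd j with hj | hj
    · rw [hj.neg_one_pow, hj.neg_one_pow, one_smul, one_mul]
    · rw [hj.neg_one_pow, hj.neg_one_pow, neg_smul, one_smul, neg_mul, one_mul]
  have h := odd_alt_geom_sum (degSeries (Polynomial.C u) (Polynomial.C lam)) hv
  simp_rw [hpow, ← hsm] at h
  rw [Gser]
  exact h

lemma comb (hd : Odd d) (w : ℕ) (v : ℂ) :
    Aser d χ lam v * Gser lam ((d : ℂ) * v) w = Nser d χ lam (d * w) v := by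
  rw [Aser, Gser, Nser, Finset.sum_mul_sum]
  have hterm : ∀ a ∈ Finset.range d, ∀ j ∈ Finset.range w,
      (((-1 : ℂ) ^ a * χ (a : ZMod d)) •
          degSeries (Polynomial.C ((a : ℂ) * v)) (Polynomial.C lam)) *
        (((-1 : ℂ) ^ j) • degSeries (Polynomial.C ((d : ℂ) * v * (j : ℂ)))
          (Polynomial.C lam))
      = ((-1 : ℂ) ^ (a + d * j) * χ ((a + d * j : ℕ) : ZMod d)) •
          degSeries (Polynomial.C (((a + d * j : ℕ) : ℂ) * v)) (Polynomial.C lam) := by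
    intro a _ j _
    rw [smul_mul_assoc, mul_smul_comm, smul_smul, degSeries_mul, ← Polynomial.C_add]
    have h1 : (a : ℂ) * v + (d : ℂ) * v * (j : ℂ) = ((a + d * j : ℕ) : ℂ) * v := by
      push_cast; ring
    have h2 : χ ((a + d * j : ℕ) : ZMod d) = χ (a : ZMod d) := by
      congr 1
      push_cast
      simp [ZMod.natCast_self]
    have h3 : (-1 : ℂ) ^ (a + d * j) = (-1 : ℂ) ^ a * (-1 : ℂ) ^ j := by
      rw [pow_add, pow_mul, hd.neg_one_pow]
    rw [h1, h2, h3]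
    ring_nf
  rw [Finset.sum_congr rfl (fun a ha => Finset.sum_congr rfl (fun j hj => hterm a ha j hj))]
  -- reindex (a, j) ↦ a + d * j
  rw [← Finset.sum_product']
  apply Finset.sum_nbij' (i := fun p => p.1 + d * p.2) (j := fun l => (l % d, l / d))
  · intro p hp
    rw [Finset.mem_product, Finset.mem_range, Finset.mem_range] at hp
    rw [Finset.mem_range]
    have hp2 : p.2 + 1 ≤ w := hp.2
    calc p.1 + d * p.2 < d + d * p.2 := by omega
      _ = d * (p.2 + 1) := by ring
      _ ≤ d * w := mul_le_mul_right hp2 d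
  · intro l hl
    rw [Finset.mem_range] at hl
    rw [Finset.mem_product, Finset.mem_range, Finset.mem_range]
    have hd0 : 0 < d := hd.pos
    constructor
    · exact Nat.mod_lt _ hd0
    · by_contra hcon
      push_neg at hcon
      have h2 : d * w ≤ d * (l / d) := mul_le_mul_right hcon d
      have h3 : d * (l / d) ≤ l := by
        rw [mul_comm]; exact Nat.div_mul_le_self l d
      exact absurd hl (not_lt.mpr (h2.trans h3))
  · intro p hp
    rw [Finset.mem_product, Finset.mem_range, Finset.mem_range] at hp
    ext
    · simp [Nat.add_mul_mod_self_left, Nat.mod_eq_of_lt hp.1]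
    · simp [Nat.add_mul_div_left _ _ (by omega : 0 < d), Nat.div_eq_of_lt hp.1]
  · intro l hl
    simp [Nat.mod_add_div]
  · intro p hp
    rfl

end Setup

section Final

variable (d : ℕ) (χ : DirichletCharacter ℂ d) (lam : ℂ)

lemma degFall_C (y mu : ℂ) (k : ℕ) :
    Polynomial.C (degFall y mu k) = degFall (Polynomial.C y) (Polynomial.C mu) k := by
  unfold degFall
  rw [map_prod]
  apply Finset.prod_congr rfl
  intro j _
  rw [map_sub, map_mul, Polynomial.C_eq_natCast]

lemma fact_qsmul (k : ℕ) (p : Polynomial ℂ) :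
    ((k ! : ℚ)⁻¹) • p = ((k ! : ℂ)⁻¹) • p := by
  rw [← algebraMap_smul ℂ ((k ! : ℚ)⁻¹) p]
  congr 1
  push_cast
  simp

lemma coeff_Nser (m : ℕ) (v : ℕ) (hv : (v : ℂ) ≠ 0) (k : ℕ) :
    PowerSeries.coeff k (Nser d χ lam m (v : ℂ))
      = (k ! : ℂ)⁻¹ • Polynomial.C ((v : ℂ) ^ k *
          ∑ i ∈ Finset.range m, (-1 : ℂ) ^ i * χ (i : ZMod d) * degFall (i : ℂ) (lam / v) k) := by
  rw [Nser, map_sum]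
  have hterm : ∀ i ∈ Finset.range m,
      PowerSeries.coeff k (((-1 : ℂ) ^ i * χ (i : ZMod d)) •
          degSeries (Polynomial.C ((i : ℂ) * (v : ℂ))) (Polynomial.C lam))
      = Polynomial.C (((-1 : ℂ) ^ i * χ (i : ZMod d)) * ((k ! : ℂ)⁻¹ *
          ((v : ℂ) ^ k * degFall (i : ℂ) (lam / v) k))) := by
    intro i _
    rw [PowerSeries.coeff_smul, coeff_degSeries, fact_qsmul]
    have hdf : degFall (Polynomial.C ((i : ℂ) * (v : ℂ))) (Polynomial.C lam) k
        = Polynomial.C ((v : ℂ) ^ k * degFall (i : ℂ) (lam / v) k) := by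
      rw [← degFall_C]
      congr 1
      have h1 : (i : ℂ) * (v : ℂ) = (v : ℂ) * (i : ℂ) := mul_comm _ _
      have h2 : lam = (v : ℂ) * (lam / v) := (mul_div_cancel₀ lam hv).symm
      rw [h1]
      conv_lhs => rw [h2]
      rw [degFall_mul_left]
    rw [hdf, Polynomial.smul_eq_C_mul, Polynomial.smul_eq_C_mul, ← Polynomial.C_mul,
      ← Polynomial.C_mul]
  rw [Finset.sum_congr rfl hterm, ← map_sum, Polynomial.smul_eq_C_mul, ← Polynomial.C_mul]
  congr 1
  rw [Finset.mul_sum, Finset.mul_sum]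
  apply Finset.sum_congr rfl
  intro i _
  ring

lemma master (w w' : ℕ) (hw : (w : ℂ) ≠ 0) (hd : Odd d) (hw' : Odd w')
    (E : ℕ → Polynomial ℂ) (hE : genDegEulerRel d χ (lam / w) E) :
    (degSeries (Polynomial.C ((d : ℂ) * (w : ℂ) * (w' : ℂ))) (Polynomial.C lam) + 1) *
      (Mser E (w : ℂ) (w' : ℂ) * Nser d χ lam (d * w) (w' : ℂ))
    = 2 * ((Aser d χ lam (w : ℂ) * Aser d χ lam (w' : ℂ)) *
        degSeries (Polynomial.C ((w : ℂ) * (w' : ℂ)) * Polynomial.X) (Polynomial.C lam)) *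
      (Gser lam ((d : ℂ) * (w : ℂ)) w' * Gser lam ((d : ℂ) * (w' : ℂ)) w) := by
  have hg := geom_step lam ((d : ℂ) * (w : ℂ)) hw'
  have hc := comb d χ lam hd w ((w' : ℂ))
  have hr := rel_trans d χ lam (w : ℂ) (w' : ℂ) hw E hE
  have key : (degSeries (Polynomial.C ((d : ℂ) * (w : ℂ) * (w' : ℂ))) (Polynomial.C lam) + 1) *
      (Mser E (w : ℂ) (w' : ℂ) * Nser d χ lam (d * w) (w' : ℂ))
      = ((degSeries (Polynomial.C ((d : ℂ) * (w : ℂ))) (Polynomial.C lam) + 1) *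
          Mser E (w : ℂ) (w' : ℂ)) *
        (Gser lam ((d : ℂ) * (w : ℂ)) w' * Nser d χ lam (d * w) (w' : ℂ)) := by
    rw [← hg]; ring
  rw [key, hr, ← hc]
  ring

lemma unit_aux (y : ℂ) :
    IsUnit (degSeries (Polynomial.C y) (Polynomial.C lam) + 1) := by
  rw [PowerSeries.isUnit_iff_constantCoeff, map_add, constantCoeff_degSeries, map_one]
  have : (1 + 1 : Polynomial ℂ) = Polynomial.C 2 := by
    rw [← Polynomial.C_1, ← Polynomial.C_add]
    norm_num
  rw [this]
  exact Polynomial.isUnit_C.mpr (by norm_num)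

lemma extract (w w' : ℕ) (hw' : (w' : ℂ) ≠ 0) (hdw : 0 < d * w)
    (E : ℕ → Polynomial ℂ) (l : ℕ) :
    ∑ i ∈ Finset.range (l + 1),
        Polynomial.C ((l.choose i : ℂ) * (w : ℂ) ^ i * (w' : ℂ) ^ (l - i) *
            Rsum d χ (l - i) (d * w - 1) (lam / w')) *
          (E i).comp (Polynomial.C (w' : ℂ) * Polynomial.X)
    = (2 * l ! : ℂ) •
        PowerSeries.coeff l (Mser E (w : ℂ) (w' : ℂ) * Nser d χ lam (d * w) (w' : ℂ)) := by
  rw [PowerSeries.coeff_mul, Finset.Nat.sum_antidiagonal_eq_sum_range_succ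
      (fun a b => PowerSeries.coeff a (Mser E (w : ℂ) (w' : ℂ)) *
        PowerSeries.coeff b (Nser d χ lam (d * w) (w' : ℂ))) l,
    Finset.smul_sum]
  apply Finset.sum_congr rfl
  intro i hi
  rw [Finset.mem_range] at hi
  have hil : i ≤ l := Nat.lt_succ_iff.mp hi
  rw [Mser, PowerSeries.coeff_mk, coeff_Nser d χ lam (d * w) w' hw' (l - i)]
  rw [smul_mul_smul_comm, smul_smul, Polynomial.smul_eq_C_mul]
  have hR : Rsum d χ (l - i) (d * w - 1) (lam / w')
      = 2 * ∑ j ∈ Finset.range (d * w), (-1 : ℂ) ^ j * χ (j : ZMod d) *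
          degFall (j : ℂ) (lam / w') (l - i) := by
    rw [Rsum, Nat.sub_add_cancel hdw]
  rw [hR]
  set S := ∑ j ∈ Finset.range (d * w), (-1 : ℂ) ^ j * χ (j : ZMod d) *
      degFall (j : ℂ) (lam / w') (l - i) with hS
  have hrearr : Polynomial.C (2 * (l !:ℂ) * ((i !:ℂ)⁻¹ * ((l - i)!:ℂ)⁻¹)) *
        (Polynomial.C ((w:ℂ) ^ i) * (E i).comp (Polynomial.C (w':ℂ) * Polynomial.X) *
          Polynomial.C ((w':ℂ) ^ (l - i) * S))
      = Polynomial.C (2 * (l !:ℂ) * ((i !:ℂ)⁻¹ * ((l - i)!:ℂ)⁻¹) * ((w:ℂ) ^ i) *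
          ((w':ℂ) ^ (l - i) * S)) *
        (E i).comp (Polynomial.C (w':ℂ) * Polynomial.X) := by
    simp only [Polynomial.C_mul]
    ring
  rw [hrearr]
  congr 1
  have hch : (l.choose i : ℂ) * i ! * (l - i)! = l ! := by
    exact_mod_cast congrArg (Nat.cast : ℕ → ℂ) (Nat.choose_mul_factorial_mul_factorial hil)
  have h0 : (i ! : ℂ) ≠ 0 := Nat.cast_ne_zero.mpr (Nat.factorial_ne_zero i)
  have h1 : ((l - i)! : ℂ) ≠ 0 := Nat.cast_ne_zero.mpr (Nat.factorial_ne_zero _)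
  congr 1
  field_simp
  ring_nf
  linear_combination (S * (w:ℂ) ^ i) * hch

end Final


/-- identity of symmetry
`∑_{i≤l} C(l,i) 𝓔_{i,λ/w₁,χ}(w₂x) w₁^i w₂^{l−i} R_{l−i}(dw₁−1, λ/w₂|χ)
 = ∑_{i≤l} C(l,i) 𝓔_{i,λ/w₂,χ}(w₁x) w₂^i w₁^{l−i} R_{l−i}(dw₂−1, λ/w₁|χ)`,
as polynomials in x over ℂ, for a fixed nonzero λ ∈ ℂ. -/
theorem genDegEuler_symmetry (d w₁ w₂ : ℕ) (hd0 : 0 < d) (hw₁0 : 0 < w₁) (hw₂0 : 0 < w₂)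
    (hd : Odd d) (hw₁ : Odd w₁) (hw₂ : Odd w₂)
    (χ : DirichletCharacter ℂ d) (hχ : χ.conductor = d) (lam : ℂ) (hlam : lam ≠ 0)
    (E₁ E₂ : ℕ → Polynomial ℂ)
    (hE₁ : genDegEulerRel d χ (lam / w₁) E₁)
    (hE₂ : genDegEulerRel d χ (lam / w₂) E₂)
    (l : ℕ) :
    ∑ i ∈ Finset.range (l + 1),
        Polynomial.C ((l.choose i : ℂ) * (w₁ : ℂ) ^ i * (w₂ : ℂ) ^ (l - i) *
            Rsum d χ (l - i) (d * w₁ - 1) (lam / w₂)) *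
          (E₁ i).comp (Polynomial.C (w₂ : ℂ) * Polynomial.X)
      = ∑ i ∈ Finset.range (l + 1),
          Polynomial.C ((l.choose i : ℂ) * (w₂ : ℂ) ^ i * (w₁ : ℂ) ^ (l - i) *
              Rsum d χ (l - i) (d * w₂ - 1) (lam / w₁)) *
            (E₂ i).comp (Polynomial.C (w₁ : ℂ) * Polynomial.X) := by
  have hw1c : (w₁ : ℂ) ≠ 0 := Nat.cast_ne_zero.mpr hw₁0.ne'
  have hw2c : (w₂ : ℂ) ≠ 0 := Nat.cast_ne_zero.mpr hw₂0.ne'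
  have m1 := master d χ lam w₁ w₂ hw1c hd hw₂ E₁ hE₁
  have m2 := master d χ lam w₂ w₁ hw2c hd hw₁ E₂ hE₂
  -- rewrite m2 to have the same unit and symmetric right-hand side as m1
  have hconst : (d : ℂ) * (w₂ : ℂ) * (w₁ : ℂ) = (d : ℂ) * (w₁ : ℂ) * (w₂ : ℂ) := by ring
  rw [hconst] at m2
  have hrhs : 2 * ((Aser d χ lam (w₂ : ℂ) * Aser d χ lam (w₁ : ℂ)) *
        degSeries (Polynomial.C ((w₂ : ℂ) * (w₁ : ℂ)) * Polynomial.X) (Polynomial.C lam)) *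
      (Gser lam ((d : ℂ) * (w₂ : ℂ)) w₁ * Gser lam ((d : ℂ) * (w₁ : ℂ)) w₂)
      = 2 * ((Aser d χ lam (w₁ : ℂ) * Aser d χ lam (w₂ : ℂ)) *
        degSeries (Polynomial.C ((w₁ : ℂ) * (w₂ : ℂ)) * Polynomial.X) (Polynomial.C lam)) *
      (Gser lam ((d : ℂ) * (w₁ : ℂ)) w₂ * Gser lam ((d : ℂ) * (w₂ : ℂ)) w₁) := by
    rw [mul_comm ((w₂ : ℂ)) ((w₁ : ℂ))]
    ring
  rw [hrhs] at m2
  have hu := unit_aux lam ((d : ℂ) * (w₁ : ℂ) * (w₂ : ℂ))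
  have hMN : Mser E₁ (w₁ : ℂ) (w₂ : ℂ) * Nser d χ lam (d * w₁) (w₂ : ℂ)
      = Mser E₂ (w₂ : ℂ) (w₁ : ℂ) * Nser d χ lam (d * w₂) (w₁ : ℂ) :=
    hu.mul_left_cancel (m1.trans m2.symm)
  have hdw1 : 0 < d * w₁ := Nat.mul_pos hd0 hw₁0
  have hdw2 : 0 < d * w₂ := Nat.mul_pos hd0 hw₂0
  rw [extract d χ lam w₁ w₂ hw2c hdw1 E₁ l, extract d χ lam w₂ w₁ hw1c hdw2 E₂ l, hMN]
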